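/- The Narayana polynomials satisfy the gamma-expansion C_{n+1}(t) = ∑_{i=0}^{⌊n/2⌋} C_i C(n,2i) t^i (1+t)^{n-2i}, where C_i is the i-th Catalan number. -/

import Mathlib

open Finset Polynomial

lemma narayana_key_rat (i b c : ℕ) :
    (((2*i).choose i : ℚ) * (((2*i+b+c).choose (2*i) : ℚ) * ((b+c).choose b : ℚ)))
      = ((2*i+b+c).choose (i+b) : ℚ) * (((i+b).choose i : ℚ) * ((i+c).choose i : ℚ)) := by
  rw [Nat.cast_choose ℚ (by omega : i ≤ 2*i), Nat.cast_choose ℚ (by omega : 2*i ≤ 2*i+b+c),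
    Nat.cast_choose ℚ (by omega : b ≤ b+c), Nat.cast_choose ℚ (by omega : i+b ≤ 2*i+b+c),
    Nat.cast_choose ℚ (by omega : i ≤ i+b), Nat.cast_choose ℚ (by omega : i ≤ i+c)]
  have h1 : 2*i - i = i := by omega
  have h2 : 2*i+b+c - 2*i = b+c := by omega
  have h3 : b+c-b = c := by omega
  have h4 : 2*i+b+c-(i+b) = i+c := by omega
  have h5 : i+b-i = b := by omega
  have h6 : i+c-i = c := by omega
  rw [h1, h2, h3, h4, h5, h6]
  have hne : ∀ x : ℕ, ((Nat.factorial x : ℕ) : ℚ) ≠ 0 :=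
    fun x => Nat.cast_ne_zero.2 (Nat.factorial_ne_zero x)
  field_simp

lemma narayana_vand (n k : ℕ) (hk : k ≤ n) :
    ∑ i ∈ range (n/2 + 1), (k+1).choose (i+1) * (n-k).choose i = (n+1).choose k := by
  have ext1 : ∑ i ∈ range (n+2), (k+1).choose (i+1) * (n-k).choose i
      = ∑ i ∈ range (n/2+1), (k+1).choose (i+1) * (n-k).choose i := by
    symm
    apply Finset.sum_subset (Finset.range_subset_range.2 (by omega : n/2+1 ≤ n+2))
    intro i _ hi
    simp only [Finset.mem_range, not_lt] at hi
    rcases le_or_gt (i+1) (k+1) with h | h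
    · rw [Nat.choose_eq_zero_of_lt (by omega : n-k < i), mul_zero]
    · rw [Nat.choose_eq_zero_of_lt (by omega : k+1 < i+1), zero_mul]
  have ext2 : ∑ i ∈ range (n+2), (k+1).choose (i+1) * (n-k).choose i
      = ∑ i ∈ range (n-k+1), (k+1).choose (i+1) * (n-k).choose i := by
    symm
    apply Finset.sum_subset (Finset.range_subset_range.2 (by omega : n-k+1 ≤ n+2))
    intro i _ hi
    simp only [Finset.mem_range, not_lt] at hi
    rw [Nat.choose_eq_zero_of_lt (by omega : n-k < i), mul_zero]
  rw [← ext1, ext2]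
  have h := Nat.add_choose_eq (k+1) (n-k) (n-k+1)
  rw [Finset.Nat.sum_antidiagonal_eq_sum_range_succ_mk] at h
  simp only [Nat.succ_eq_add_one] at h
  rw [Finset.sum_range_succ'] at h
  have hnk : k + 1 + (n - k) = n + 1 := by omega
  rw [hnk] at h
  have hsymm : (n+1).choose (n-k+1) = (n+1).choose k := by
    rw [← Nat.choose_symm (by omega : k ≤ n+1)]
    congr 1
    omega
  rw [hsymm] at h
  rw [h]
  have h0 : (k+1).choose 0 * (n-k).choose (n-k+1-0) = 0 := by
    rw [Nat.choose_eq_zero_of_lt (by omega : n-k < n-k+1-0), mul_zero]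
  rw [h0, add_zero]
  apply Finset.sum_congr rfl
  intro i hi
  simp only [Finset.mem_range] at hi
  congr 1
  rw [← Nat.choose_symm (by omega : i ≤ n-k)]
  congr 1
  omega

lemma narayana_term (n m : ℕ) (hmn : m ≤ n) (i : ℕ) (hi : i < n/2 + 1) :
    (if i ≤ m then (catalan i : ℚ) * (n.choose (2 * i)) * ((n - 2 * i).choose (m - i) : ℚ) else 0)
      = (n.choose m : ℚ) * (((m+1).choose (i+1) : ℚ) * ((n-m).choose i : ℚ)) / (m + 1) := by
  have h2i : 2*i ≤ n := by omega
  by_cases him : i ≤ m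
  · rw [if_pos him]
    by_cases hin : m + i ≤ n
    · obtain ⟨b, rfl⟩ : ∃ b, m = i + b := ⟨m - i, by omega⟩
      obtain ⟨c, rfl⟩ : ∃ c, n = 2*i + b + c := ⟨n - (i+b) - i, by omega⟩
      have e1 : 2*i+b+c - 2*i = b+c := by omega
      have e2 : i+b-i = b := by omega
      have e3 : 2*i+b+c-(i+b) = i+c := by omega
      rw [e1, e2, e3]
      have hc : ((i:ℚ)+1) * (catalan i : ℚ) = ((2*i).choose i : ℚ) := by
        have h := succ_mul_catalan_eq_centralBinom i
        rw [Nat.centralBinom_eq_two_mul_choose] at h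
        exact_mod_cast h
      have hs : ((i:ℚ)+(b:ℚ)+1) * ((i+b).choose i : ℚ)
          = ((i+b+1).choose (i+1) : ℚ) * ((i:ℚ)+1) := by
        have h := Nat.add_one_mul_choose_eq (i+b) i
        exact_mod_cast h
      have hkey := narayana_key_rat i b c
      push_cast at hc hs hkey ⊢
      rw [eq_div_iff (by positivity : ((i:ℚ)+(b:ℚ)+1) ≠ 0)]
      apply mul_left_cancel₀ (by positivity : ((i:ℚ)+1) ≠ 0)
      linear_combination (((2*i+b+c).choose (2*i) : ℚ) * ((b+c).choose b : ℚ) * ((i:ℚ)+(b:ℚ)+1)) * hc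
        + ((i:ℚ)+(b:ℚ)+1) * hkey + (((2*i+b+c).choose (i+b) : ℚ) * ((i+c).choose i : ℚ)) * hs
    · rw [Nat.choose_eq_zero_of_lt (by omega : n-2*i < m-i),
        Nat.choose_eq_zero_of_lt (by omega : n-m < i)]
      push_cast
      ring
  · rw [if_neg him, Nat.choose_eq_zero_of_lt (by omega : m+1 < i+1)]
    push_cast
    ring

theorem narayana_gamma_expansion (n : ℕ) :
    (∑ k ∈ range (n + 1), ((n.choose k * (n + 1).choose k : ℚ) / (k + 1)) • (X : Polynomial ℚ) ^ k) =
      ∑ i ∈ range (n / 2 + 1),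
        ((catalan i : ℚ) * (n.choose (2 * i))) • ((X : Polynomial ℚ) ^ i * (1 + X) ^ (n - 2 * i)) := by
  ext m
  rw [finset_sum_coeff, finset_sum_coeff]
  simp only [coeff_smul, smul_eq_mul, coeff_X_pow, X_pow_mul, coeff_mul_X_pow',
    coeff_one_add_X_pow, mul_ite, mul_one, mul_zero]
  rw [Finset.sum_ite_eq (range (n+1)) m]
  simp only [Finset.mem_range]
  by_cases hm : m < n + 1
  · rw [if_pos hm]
    have hmn : m ≤ n := by omega
    rw [Finset.sum_congr rfl (fun i hi =>
      narayana_term n m hmn i (Finset.mem_range.1 hi))]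
    rw [← Finset.sum_div, ← Finset.mul_sum]
    have hsum : ∑ i ∈ range (n/2+1), (((m+1).choose (i+1) : ℚ) * ((n-m).choose i : ℚ))
        = ((n+1).choose m : ℚ) := by
      rw [← narayana_vand n m hmn]
      push_cast
      rfl
    rw [hsum]
  · rw [if_neg hm]
    rw [eq_comm]
    apply Finset.sum_eq_zero
    intro i hi
    simp only [Finset.mem_range] at hi
    rcases le_or_gt i m with h | h
    · rw [if_pos h, Nat.choose_eq_zero_of_lt (by omega : n-2*i < m-i)]
      push_cast
      ring
    · rw [if_neg (by omega : ¬ i ≤ m)]
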